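/- arXiv:2108.06799 — 2 statements merged into one kernel-verified Lean document; each statement's English description precedes it below -/
import Mathlib

section
/- Inverse mapping of a primitive Pythagorean triple to the partition parameters: if x, y, z are positive integers with x^2 + y^2 = z^2, gcd(x, y) = 1, y even, and l is the positive integer with l^2 = z − y, then 2*l divides x − l^2, and setting S = x − l^2 and t = S / (2*l) one has S = 2*t*l, y = S + 2*t^2 and z = S + 2*t^2 + l^2. -/
theorem stmt_7 (x y z : ℕ) (hx : 0 < x) (hy : 0 < y) (hz : 0 < z)
    (hpyth : x ^ 2 + y ^ 2 = z ^ 2)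
    (hgcd : Nat.gcd x y = 1) (hyeven : Even y)
    (l : ℕ) (hl : 0 < l) (hlsq : l ^ 2 = z - y) :
    2 * l ∣ x - l ^ 2 ∧
      (let S := x - l ^ 2
       let t := S / (2 * l)
       S = 2 * t * l ∧ y = S + 2 * t ^ 2 ∧ z = S + 2 * t ^ 2 + l ^ 2) := by
  have hzy : y ≤ z := by
    by_contra h
    push_neg at h
    have : z ^ 2 < y ^ 2 := Nat.pow_lt_pow_left h (by norm_num)
    omega
  have hz_eq : z = y + l ^ 2 := by omega
  have hx2 : x ^ 2 = l ^ 2 * (2 * y + l ^ 2) := by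
    have h : x ^ 2 + y ^ 2 = (y + l ^ 2) ^ 2 := by rw [← hz_eq]; exact hpyth
    nlinarith [h]
  have hlx : l ∣ x := by
    have : l ^ 2 ∣ x ^ 2 := ⟨2 * y + l ^ 2, hx2⟩
    exact (Nat.pow_dvd_pow_iff (by norm_num)).mp this
  obtain ⟨m, hxm⟩ := hlx
  have hmsq : m ^ 2 = 2 * y + l ^ 2 := by
    have h : l ^ 2 * m ^ 2 = l ^ 2 * (2 * y + l ^ 2) := by
      rw [← hx2, hxm]; ring
    exact Nat.eq_of_mul_eq_mul_left (by positivity) h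
  have hml : l ≤ m := by
    by_contra h
    push_neg at h
    have : m ^ 2 < l ^ 2 := Nat.pow_lt_pow_left h (by norm_num)
    omega
  have sqmod : ∀ n : ℕ, n ^ 2 % 2 = n % 2 := by
    intro n
    rcases Nat.mod_two_eq_zero_or_one n with h | h <;> rw [Nat.pow_mod, h] <;> rfl
  have hpar : m % 2 = l % 2 := by
    have h1 := sqmod m
    have h2 := sqmod l
    omega
  obtain ⟨k, hk⟩ : ∃ k, m = l + 2 * k := ⟨(m - l) / 2, by omega⟩
  have hx_eq : x = l ^ 2 + 2 * l * k := by rw [hxm, hk]; ring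
  have hy_eq : y = 2 * l * k + 2 * k ^ 2 := by
    have : (l + 2 * k) ^ 2 = 2 * y + l ^ 2 := by rw [← hk]; exact hmsq
    nlinarith [this]
  have hS : x - l ^ 2 = 2 * l * k := by omega
  have hdvd : 2 * l ∣ x - l ^ 2 := ⟨k, by omega⟩
  have ht2 : 2 * l * k / (2 * l) = k := Nat.mul_div_cancel_left k (by positivity)
  refine ⟨hdvd, ?_, ?_, ?_⟩ <;> simp only [hS, ht2]
  · ring
  · linarith [hy_eq]
  · linarith [hy_eq, hz_eq]
end

section
/- Counting the partitions of the side of the generating square: for every even positive integer S, the number of ordered pairs (t, l) of positive integers with S = 2*t*l, l odd and gcd(t, l) = 1 equals 2^j, where j is the number of distinct odd prime divisors of S. -/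
open Finset

theorem stmt_14 (S : ℕ) (hS : 0 < S) (hSeven : Even S) :
    {p : ℕ × ℕ | 0 < p.1 ∧ 0 < p.2 ∧ S = 2 * p.1 * p.2 ∧ Odd p.2 ∧
        Nat.gcd p.1 p.2 = 1}.ncard
      = 2 ^ (S.primeFactors.erase 2).card := by
  classical
  have hSne : S ≠ 0 := hS.ne'
  have h2S : 2 ∣ S := hSeven.two_dvd
  set P : Finset ℕ := S.primeFactors.erase 2 with hPdef
  have hPprime : ∀ q ∈ P, q.Prime := fun q hq =>
    (Nat.mem_primeFactors.mp (Finset.mem_of_mem_erase hq)).1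
  have hPpos : ∀ q ∈ P, S.factorization q ≠ 0 := by
    intro q hq
    have : q ∈ (S.factorization).support := by
      rw [Nat.support_factorization]; exact Finset.mem_of_mem_erase hq
    exact Finsupp.mem_support_iff.mp this
  set L : Finset ℕ → ℕ := fun Q => ∏ p ∈ Q, p ^ S.factorization p with hLdef
  have hfac : ∀ Q ⊆ P, ∀ q, (L Q).factorization q
      = if q ∈ Q then S.factorization q else 0 := by
    intro Q hQ q
    have h1 : (L Q).factorization
        = ∑ p ∈ Q, Finsupp.single p (S.factorization p) := by
      rw [hLdef]
      rw [Nat.factorization_prod (fun p hp => pow_ne_zero _ (hPprime p (hQ hp)).pos.ne')]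
      exact Finset.sum_congr rfl fun p hp =>
        Nat.Prime.factorization_pow (hPprime p (hQ hp))
    rw [h1, Finsupp.finset_sum_apply]
    simp only [Finsupp.single_apply]
    exact Finset.sum_ite_eq' Q q (fun p => S.factorization p)
  have hLne : ∀ Q ⊆ P, L Q ≠ 0 := fun Q hQ =>
    Finset.prod_ne_zero_iff.mpr fun p hp => pow_ne_zero _ (hPprime p (hQ hp)).pos.ne'
  have hLodd : ∀ Q ⊆ P, Odd (L Q) := by
    intro Q hQ
    rw [← Nat.not_even_iff_odd, even_iff_two_dvd]
    intro h2
    have := Nat.Prime.factorization_pos_of_dvd Nat.prime_two (hLne Q hQ) h2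
    have h2Q : (2 : ℕ) ∉ Q := fun h => (Finset.mem_erase.mp (hQ h)).1 rfl
    rw [hfac Q hQ 2, if_neg h2Q] at this
    exact absurd this (lt_irrefl 0)
  have hLdvd : ∀ Q ⊆ P, 2 * L Q ∣ S := by
    intro Q hQ
    rw [← Nat.factorization_le_iff_dvd (mul_ne_zero two_ne_zero (hLne Q hQ)) hSne]
    intro q
    rw [Nat.factorization_mul two_ne_zero (hLne Q hQ)]
    simp only [Finsupp.coe_add, Pi.add_apply]
    rw [Nat.Prime.factorization Nat.prime_two, hfac Q hQ q, Finsupp.single_apply]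
    rcases eq_or_ne q 2 with rfl | hq2
    · have h2Q : (2 : ℕ) ∉ Q := fun h => (Finset.mem_erase.mp (hQ h)).1 rfl
      rw [if_pos rfl, if_neg h2Q]
      have h := Nat.Prime.factorization_pos_of_dvd Nat.prime_two hSne h2S
      omega
    · rw [if_neg (by omega)]
      split <;> simp
  have hLfact2 : ∀ Q ⊆ P, ∀ q ∈ Q, (2 * L Q).factorization q = S.factorization q := by
    intro Q hQ q hq
    have hq2 : q ≠ 2 := (Finset.mem_erase.mp (hQ hq)).1
    rw [Nat.factorization_mul two_ne_zero (hLne Q hQ)]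
    simp only [Finsupp.coe_add, Pi.add_apply]
    rw [Nat.Prime.factorization Nat.prime_two, Finsupp.single_apply, if_neg (by omega),
      hfac Q hQ q, if_pos hq]
    simp
  have hLprimeFactors : ∀ Q ⊆ P, (L Q).primeFactors = Q := by
    intro Q hQ
    ext q
    rw [← Nat.support_factorization, Finsupp.mem_support_iff, hfac Q hQ q]
    constructor
    · intro h; by_contra hq; simp [hq] at h
    · intro h; simpa [h] using hPpos q (hQ h)
  set g : Finset ℕ → ℕ × ℕ := fun Q => (S / (2 * L Q), L Q) with hgdef
  have hginj : Set.InjOn g ↑P.powerset := by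
    intro Q hQ Q' hQ' h
    have : L Q = L Q' := congrArg Prod.snd h
    rw [← hLprimeFactors Q (Finset.mem_powerset.mp hQ),
      ← hLprimeFactors Q' (Finset.mem_powerset.mp hQ'), this]
  have hset : {p : ℕ × ℕ | 0 < p.1 ∧ 0 < p.2 ∧ S = 2 * p.1 * p.2 ∧ Odd p.2 ∧
        Nat.gcd p.1 p.2 = 1} = ↑(P.powerset.image g) := by
    ext ⟨t, l⟩
    simp only [Set.mem_setOf_eq, Finset.coe_image, Set.mem_image, Finset.mem_coe,
      Finset.mem_powerset]
    constructor
    · rintro ⟨ht, hl, hStl, hlodd, hgcd⟩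
      have hlne : l ≠ 0 := hl.ne'
      refine ⟨l.primeFactors, ?_, ?_⟩
      · intro q hq
        obtain ⟨hqp, hql, _⟩ := Nat.mem_primeFactors.mp hq
        have hq2 : q ≠ 2 := by
          rintro rfl
          exact (Nat.not_even_iff_odd.mpr hlodd) (even_iff_two_dvd.mpr hql)
        exact Finset.mem_erase.mpr ⟨hq2,
          Nat.mem_primeFactors.mpr ⟨hqp, hql.trans ⟨2 * t, by linarith⟩, hSne⟩⟩
      · have hLl : L l.primeFactors = l := by
          have h1 : ∀ q ∈ l.primeFactors, q ^ S.factorization q = q ^ l.factorization q := by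
            intro q hq
            obtain ⟨hqp, hql, _⟩ := Nat.mem_primeFactors.mp hq
            have hq2 : q ≠ 2 := by
              rintro rfl
              exact (Nat.not_even_iff_odd.mpr hlodd) (even_iff_two_dvd.mpr hql)
            have hqt : ¬ q ∣ 2 * t := by
              intro hdvd
              rcases (Nat.Prime.dvd_mul hqp).mp hdvd with h | h
              · exact hq2 ((Nat.prime_dvd_prime_iff_eq hqp Nat.prime_two).mp h)
              · have : q ∣ Nat.gcd t l := Nat.dvd_gcd h hql
                rw [hgcd] at this
                exact hqp.one_lt.ne' (Nat.eq_one_of_dvd_one this)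
            have hS2tl : S = (2 * t) * l := by linarith
            congr 1
            rw [hS2tl, Nat.factorization_mul (by positivity) hlne]
            simp [Nat.factorization_eq_zero_of_not_dvd hqt]
          rw [hLdef]
          calc ∏ p ∈ l.primeFactors, p ^ S.factorization p
              = ∏ p ∈ l.primeFactors, p ^ l.factorization p := Finset.prod_congr rfl h1
            _ = l := by
                rw [← Nat.support_factorization]
                exact Nat.factorization_prod_pow_eq_self hlne
        have hdiv : S / (2 * l) = t :=
          Nat.div_eq_of_eq_mul_right (by positivity) (by rw [hStl]; ring)
        rw [hgdef]
        dsimp only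
        rw [hLl, hdiv]
    · rintro ⟨Q, hQ, hgq⟩
      have hld := hLdvd Q hQ
      have hlne := hLne Q hQ
      obtain ⟨rfl, rfl⟩ : t = S / (2 * L Q) ∧ l = L Q :=
        ⟨(congrArg Prod.fst hgq).symm, (congrArg Prod.snd hgq).symm⟩
      have htpos : 0 < S / (2 * L Q) :=
        Nat.div_pos (Nat.le_of_dvd hS hld) (by positivity)
      have hmul : S / (2 * L Q) * (2 * L Q) = S := Nat.div_mul_cancel hld
      refine ⟨htpos, Nat.pos_of_ne_zero hlne, by linarith, hLodd Q hQ, ?_⟩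
      by_contra hgcd
      obtain ⟨q, hqp, hqd⟩ := Nat.exists_prime_and_dvd hgcd
      have hqt : q ∣ S / (2 * L Q) := hqd.trans (Nat.gcd_dvd_left _ _)
      have hql : q ∣ L Q := hqd.trans (Nat.gcd_dvd_right _ _)
      have hqQ : q ∈ Q := by
        have := Nat.Prime.factorization_pos_of_dvd hqp hlne hql
        rw [hfac Q hQ q] at this
        by_contra h; rw [if_neg h] at this; exact absurd this (lt_irrefl 0)
      have hfz : (S / (2 * L Q)).factorization q = 0 := by
        rw [Nat.factorization_div hld, Finsupp.tsub_apply, hLfact2 Q hQ q hqQ,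
          Nat.sub_self]
      exact (Nat.Prime.factorization_pos_of_dvd hqp htpos.ne' hqt).ne' hfz
  rw [hset, Set.ncard_coe_finset, Finset.card_image_of_injOn hginj,
    Finset.card_powerset]
end
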